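/- For n = 3, the operators A_{11}^± and A_{2i}^∓ with opposite superscripts commute: [A_{11}⁺, A_{21}⁻] = 0, [A_{11}⁺, A_{22}⁻] = 0, [A_{11}⁻, A_{21}⁺] = 0 and [A_{11}⁻, A_{22}⁺] = 0 in End_ℂ(L). -/

import Mathlib

open scoped BigOperators
open MvPolynomial

noncomputable section

/-- The polynomial ring `Λ = ℂ[x_{ki}]` (variables indexed by pairs `(k, i)`). -/
abbrev Lam : Type := MvPolynomial (ℕ × ℕ) ℂ

/-- `L`, the field of fractions of `Λ`. -/
abbrev L : Type := FractionRing Lam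

/-- The variable `x_{ki}` as an element of `L`. -/
def x (k i : ℕ) : L := algebraMap Lam L (X (k, i))

/-- The algebra automorphism of `Λ` sending `x_v ↦ x_v - 1` and fixing the other variables. -/
def shiftEquiv (v : ℕ × ℕ) : Lam ≃ₐ[ℂ] Lam :=
  AlgEquiv.ofAlgHom
    (aeval (fun w => if w = v then X w - 1 else X w))
    (aeval (fun w => if w = v then X w + 1 else X w))
    (by apply MvPolynomial.algHom_ext; intro w; by_cases h : w = v <;> simp [h])
    (by apply MvPolynomial.algHom_ext; intro w; by_cases h : w = v <;> simp [h])

/-- The automorphism `δ^{ki}` of `L`, determined by `δ^{ki}(x_{ℓj}) = x_{ℓj} - δ_{ℓk}δ_{ij}`. -/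
def δ (k i : ℕ) : L ≃ₐ[ℂ] L := IsFractionRing.algEquivOfAlgEquiv (shiftEquiv (k, i))

/-- Multiplication by `a ∈ L` as a `ℂ`-linear endomorphism `m_a` of `L`. -/
def mulOp (a : L) : Module.End ℂ L := LinearMap.mulLeft ℂ a

/-- A field automorphism of `L` as a `ℂ`-linear endomorphism of `L`. -/
def lin (e : L ≃ₐ[ℂ] L) : Module.End ℂ L := e.toLinearMap

/-- The rational function `a_{ki}^+`. -/
def aP (k i : ℕ) : L :=
  -((∏ j ∈ Finset.Icc 1 (k + 1), (x (k + 1) j - x k i)) /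
    ∏ j ∈ (Finset.Icc 1 k).erase i, (x k j - x k i))

/-- The rational function `a_{ki}^-`. -/
def aM (k i : ℕ) : L :=
  (∏ j ∈ Finset.Icc 1 (k - 1), (x (k - 1) j - x k i)) /
    ∏ j ∈ (Finset.Icc 1 k).erase i, (x k j - x k i)

/-- The operator `A_{ki}^+ = δ^{ki} ∘ m_{a_{ki}^+}`. -/
def Ap (k i : ℕ) : Module.End ℂ L := lin (δ k i) * mulOp (aP k i)

/-- The operator `A_{ki}^- = (δ^{ki})^{-1} ∘ m_{a_{ki}^-}`. -/
def Am (k i : ℕ) : Module.End ℂ L := lin (δ k i).symm * mulOp (aM k i)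

/-- The operator `X_k^+ = ∑_{i=1}^k A_{ki}^+`. -/
def Xp (k : ℕ) : Module.End ℂ L := ∑ i ∈ Finset.Icc 1 k, Ap k i

/-- The operator `X_k^- = ∑_{i=1}^k A_{ki}^-`. -/
def Xm (k : ℕ) : Module.End ℂ L := ∑ i ∈ Finset.Icc 1 k, Am k i

/-- The operator `X_{kk}`. -/
def Xd (k : ℕ) : Module.End ℂ L :=
  mulOp ((∑ j ∈ Finset.Icc 1 k, (x k j + (j : L) - 1)) -
    ∑ i ∈ Finset.Icc 1 (k - 1), (x (k - 1) i + (i : L) - 1))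

/-- The Vandermonde polynomial `∏_{1 ≤ i < j ≤ k} (x_{ki} - x_{kj})`, as an element of `L`. -/
def vand (k : ℕ) : L :=
  ∏ p ∈ (Finset.Icc 1 k ×ˢ Finset.Icc 1 k).filter (fun p => p.1 < p.2),
    (x k p.1 - x k p.2)

/-- The operator `𝒱_k = m_{∏_{i<j}(x_{ki} - x_{kj})}`. -/
def Vop (k : ℕ) : Module.End ℂ L := mulOp (vand k)

/-- The generating set of `U_n`: the `X_k^±` for `1 ≤ k ≤ n-1` and the `X_{kk}` for `1 ≤ k ≤ n`. -/
def Ugens (n : ℕ) : Set (Module.End ℂ L) :=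
  {u | ∃ k, 1 ≤ k ∧ k + 1 ≤ n ∧ (u = Xp k ∨ u = Xm k)} ∪
    {u | ∃ k, 1 ≤ k ∧ k ≤ n ∧ u = Xd k}

/-- `U_n`, the Gelfand–Tsetlin realization of `U(gl_n)` inside `End_ℂ(L)`. -/
def Ualg (n : ℕ) : Subalgebra ℂ (Module.End ℂ L) := Algebra.adjoin ℂ (Ugens n)

/-- `𝒜(gl_n)`, the subalgebra generated by `U_n` together with `𝒱_2, …, 𝒱_n`. -/
def Agl (n : ℕ) : Subalgebra ℂ (Module.End ℂ L) :=
  Algebra.adjoin ℂ (Ugens n ∪ {u | ∃ k, 2 ≤ k ∧ k ≤ n ∧ u = Vop k})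


-- Auxiliary lemmas
set_option synthInstance.maxHeartbeats 1000000
set_option maxHeartbeats 2000000

lemma shift_comm (v w : ℕ × ℕ) (p : Lam) :
    shiftEquiv v (shiftEquiv w p) = shiftEquiv w (shiftEquiv v p) := by
  have h : ((shiftEquiv v).toAlgHom.comp (shiftEquiv w).toAlgHom)
      = ((shiftEquiv w).toAlgHom.comp (shiftEquiv v).toAlgHom) := by
    apply MvPolynomial.algHom_ext; intro u
    by_cases h1 : u = v <;> by_cases h2 : u = w <;> by_cases h3 : v = w <;>
      simp [shiftEquiv, h1, h2, h3, sub_sub] <;> simp_all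
  exact DFunLike.congr_fun h p

lemma δ_alg (k i : ℕ) (p : Lam) :
    δ k i (algebraMap Lam L p) = algebraMap Lam L (shiftEquiv (k, i) p) :=
  IsFractionRing.algEquivOfAlgEquiv_algebraMap _ _

lemma δ_comm (k i l j : ℕ) (y : L) : δ k i (δ l j y) = δ l j (δ k i y) := by
  obtain ⟨p, q, -, rfl⟩ := IsFractionRing.div_surjective (A := Lam) y
  simp only [map_div₀, δ_alg, shift_comm]

lemma δ_symm_comm (k i l j : ℕ) (y : L) :
    δ k i ((δ l j).symm y) = (δ l j).symm (δ k i y) := by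
  apply (δ l j).injective
  rw [AlgEquiv.apply_symm_apply, ← δ_comm, AlgEquiv.apply_symm_apply]

lemma δ_x (k i l j : ℕ) :
    δ k i (x l j) = if (l, j) = (k, i) then x l j - 1 else x l j := by
  by_cases h : (l, j) = (k, i) <;> simp [x, δ_alg, shiftEquiv, h]

lemma δ_symm_x (k i l j : ℕ) :
    (δ k i).symm (x l j) = if (l, j) = (k, i) then x l j + 1 else x l j := by
  apply (δ k i).injective
  rw [AlgEquiv.apply_symm_apply]
  by_cases h : (l, j) = (k, i) <;> simp [h, δ_x]

lemma key (e f : L ≃ₐ[ℂ] L) (a b : L)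
    (h1 : ∀ y, e (f y) = f (e y))
    (h2 : f.symm a * b = e.symm b * a) :
    (lin e * mulOp a) * (lin f * mulOp b) - (lin f * mulOp b) * (lin e * mulOp a) = 0 := by
  suffices h : (lin e * mulOp a) * (lin f * mulOp b) = (lin f * mulOp b) * (lin e * mulOp a) by
    rw [h]; ext y; simp [LinearMap.sub_apply]
  ext y
  simp only [Module.End.mul_apply, lin, mulOp, AlgEquiv.toLinearMap_apply,
    LinearMap.mulLeft_apply]
  calc e (a * f (b * y))
      = e (f ((f.symm a * b) * y)) := by simp [map_mul, mul_assoc]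
    _ = f (e ((e.symm b * a) * y)) := by rw [h2, h1]
    _ = f (b * e (a * y)) := by simp [map_mul, mul_assoc]

example : (Finset.Icc 1 2 : Finset ℕ) = {1, 2} := rfl
example : (Finset.Icc 1 3 : Finset ℕ) = {1, 2, 3} := rfl
example : ((Finset.Icc 1 1).erase 1 : Finset ℕ) = ∅ := rfl
example : ((Finset.Icc 1 2).erase 1 : Finset ℕ) = {2} := rfl
example : ((Finset.Icc 1 2).erase 2 : Finset ℕ) = {1} := rfl
example : (Finset.Icc 1 0 : Finset ℕ) = ∅ := rfl

lemma aP11 : aP 1 1 = -((x 2 1 - x 1 1) * (x 2 2 - x 1 1)) := by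
  have h1 : (Finset.Icc 1 2 : Finset ℕ) = {1, 2} := rfl
  have h2 : ((Finset.Icc 1 1).erase 1 : Finset ℕ) = ∅ := rfl
  rw [aP, h1, h2]
  simp

lemma aM11 : aM 1 1 = 1 := by
  have h1 : (Finset.Icc 1 0 : Finset ℕ) = ∅ := rfl
  have h2 : ((Finset.Icc 1 1).erase 1 : Finset ℕ) = ∅ := rfl
  rw [aM, h1, h2]
  simp

lemma aM21 : aM 2 1 = (x 1 1 - x 2 1) / (x 2 2 - x 2 1) := by
  have h1 : (Finset.Icc 1 1 : Finset ℕ) = {1} := rfl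
  have h2 : ((Finset.Icc 1 2).erase 1 : Finset ℕ) = {2} := rfl
  rw [aM, h1, h2]
  simp

lemma aM22 : aM 2 2 = (x 1 1 - x 2 2) / (x 2 1 - x 2 2) := by
  have h1 : (Finset.Icc 1 1 : Finset ℕ) = {1} := rfl
  have h2 : ((Finset.Icc 1 2).erase 2 : Finset ℕ) = {1} := rfl
  rw [aM, h1, h2]
  simp

lemma aP21 : aP 2 1 = -(((x 3 1 - x 2 1) * ((x 3 2 - x 2 1) * (x 3 3 - x 2 1))) / (x 2 2 - x 2 1)) := by
  have h1 : (Finset.Icc 1 3 : Finset ℕ) = {1, 2, 3} := rfl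
  have h2 : ((Finset.Icc 1 2).erase 1 : Finset ℕ) = {2} := rfl
  rw [aP, h1, h2]
  simp

lemma aP22 : aP 2 2 = -(((x 3 1 - x 2 2) * ((x 3 2 - x 2 2) * (x 3 3 - x 2 2))) / (x 2 1 - x 2 2)) := by
  have h1 : (Finset.Icc 1 3 : Finset ℕ) = {1, 2, 3} := rfl
  have h2 : ((Finset.Icc 1 2).erase 2 : Finset ℕ) = {1} := rfl
  rw [aP, h1, h2]
  simp


/-- `[A_{11}⁺, A_{21}⁻] = [A_{11}⁺, A_{22}⁻] = [A_{11}⁻, A_{21}⁺]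
= [A_{11}⁻, A_{22}⁺] = 0`. -/
theorem A11_A2i_opposite_signs_commute :
    Ap 1 1 * Am 2 1 - Am 2 1 * Ap 1 1 = 0 ∧
    Ap 1 1 * Am 2 2 - Am 2 2 * Ap 1 1 = 0 ∧
    Am 1 1 * Ap 2 1 - Ap 2 1 * Am 1 1 = 0 ∧
    Am 1 1 * Ap 2 2 - Ap 2 2 * Am 1 1 = 0 := by
  refine ⟨?_, ?_, ?_, ?_⟩
  · rw [Ap, Am]
    refine key (δ 1 1) ((δ 2 1).symm) (aP 1 1) (aM 2 1)
      (fun y => δ_symm_comm 1 1 2 1 y) ?_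
    rw [AlgEquiv.symm_symm, aP11, aM21]
    simp [δ_x, δ_symm_x, Prod.ext_iff, Prod.fst_one, Prod.snd_one]
    ring
  · rw [Ap, Am]
    refine key (δ 1 1) ((δ 2 2).symm) (aP 1 1) (aM 2 2)
      (fun y => δ_symm_comm 1 1 2 2 y) ?_
    rw [AlgEquiv.symm_symm, aP11, aM22]
    simp [δ_x, δ_symm_x, Prod.ext_iff, Prod.fst_one, Prod.snd_one]
    ring
  · rw [Ap, Am]
    refine key ((δ 1 1).symm) (δ 2 1) (aM 1 1) (aP 2 1)
      (fun y => (δ_symm_comm 2 1 1 1 y).symm) ?_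
    rw [AlgEquiv.symm_symm, aM11, aP21]
    simp [δ_x, δ_symm_x, Prod.ext_iff, Prod.fst_one, Prod.snd_one]
  · rw [Ap, Am]
    refine key ((δ 1 1).symm) (δ 2 2) (aM 1 1) (aP 2 2)
      (fun y => (δ_symm_comm 2 2 1 1 y).symm) ?_
    rw [AlgEquiv.symm_symm, aM11, aP22]
    simp [δ_x, δ_symm_x, Prod.ext_iff, Prod.fst_one, Prod.snd_one]
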